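/- Let ℓ ≥ 1 and k ≥ 1 be integers, and let ψ be any proper 3-coloring of the subgraph of T(u,v,k,ℓ) induced by the vertex set V_ℓ. Then the number of proper 3-colorings of T(u,v,k,ℓ) whose restriction to V_ℓ equals ψ is at most 2^(2^(k+ℓ) + 3^ℓ). -/

import Mathlib

/-- The base relation for the graph `P(u,v,b)`: vertices are `Sum.inl 0 = u`,
`Sum.inl 1 = v`, and `Sum.inr i = v_{i+1}` (0-indexed path vertices).
Edges: consecutive path vertices, `u` to odd-numbered path vertices `v₁, v₃, …`
(even 0-based index), and `v` to even-numbered ones `v₂, v₄, …`. -/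
def PAdj (b : ℕ) : (Fin 2 ⊕ Fin b) → (Fin 2 ⊕ Fin b) → Prop
  | Sum.inr i, Sum.inr j => (j : ℕ) = (i : ℕ) + 1
  | Sum.inl x, Sum.inr i => (x : ℕ) = (i : ℕ) % 2
  | _, _ => False

/-- The graph `P(u,v,b)`. -/
def Pgraph (b : ℕ) : SimpleGraph (Fin 2 ⊕ Fin b) := SimpleGraph.fromRel (PAdj b)

/-- The set of proper 3-colorings of a graph `G`. -/
def properColorings {V : Type*} (G : SimpleGraph V) : Set (V → Fin 3) :=
  {ψ | ∀ a b, G.Adj a b → ψ a ≠ ψ b}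

/-- The type of "inner" vertices of `T(u,v,k,ℓ)` (all vertices except the two
special vertices `u, v`). At level `0` these are the `2^k` path vertices of
`P(u,v,2^k)`; at level `ℓ+1` they are the five path vertices `v₁,…,v₅` of the
base copy of `P(u,v,5)` together with the inner vertices of the three glued
copies of `T(·,·,k,ℓ)`. -/
def TInner (k : ℕ) : ℕ → Type
  | 0 => Fin (2 ^ k)
  | ℓ + 1 => Fin 5 ⊕ (Fin 3 × TInner k ℓ)

/-- The vertex type of `T(u,v,k,ℓ)`: the special vertices `u = Sum.inl 0`,
`v = Sum.inl 1` together with the inner vertices. -/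
abbrev TVert (k ℓ : ℕ) : Type := Fin 2 ⊕ TInner k ℓ

/-- The pair of path vertices of `P(u,v,5)` onto which the `c`-th copy of
`T(·,·,k,ℓ-1)` is glued: `(v₁,v₃)` for `c = 0`, `(v₂,v₄)` for `c = 1`,
`(v₃,v₅)` for `c = 2` (0-indexed). -/
def gluePair (c : Fin 3) : Fin 5 × Fin 5 :=
  (⟨c.val, by omega⟩, ⟨c.val + 2, by have := c.isLt; omega⟩)

/-- The embedding of the `c`-th copy of `T(·,·,k,ℓ)` into `T(u,v,k,ℓ+1)`:
its special vertices are identified with the glue pair, and its inner vertices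
are tagged with `c`. -/
def embedT (k ℓ : ℕ) (c : Fin 3) : TVert k ℓ → TVert k (ℓ + 1)
  | Sum.inl x => if x = 0 then Sum.inr (Sum.inl (gluePair c).1)
                 else Sum.inr (Sum.inl (gluePair c).2)
  | Sum.inr w => Sum.inr (Sum.inr (c, w))

/-- The embedding of the base copy of `P(u,v,5)` into `T(u,v,k,ℓ+1)`. -/
def embedP (k ℓ : ℕ) : (Fin 2 ⊕ Fin 5) → TVert k (ℓ + 1)
  | Sum.inl x => Sum.inl x
  | Sum.inr y => Sum.inr (Sum.inl y)

/-- The graph `T(u,v,k,ℓ)`, defined recursively: `T(u,v,k,0) = P(u,v,2^k)`, and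
`T(u,v,k,ℓ+1)` is obtained from `P(u,v,5)` by gluing three copies of
`T(·,·,k,ℓ)` onto the pairs `(v₁,v₃)`, `(v₂,v₄)`, `(v₃,v₅)`. -/
def TGraph (k : ℕ) : (ℓ : ℕ) → SimpleGraph (TVert k ℓ)
  | 0 => Pgraph (2 ^ k)
  | ℓ + 1 => SimpleGraph.fromRel (fun a b =>
      (∃ x y, (Pgraph 5).Adj x y ∧ a = embedP k ℓ x ∧ b = embedP k ℓ y) ∨
      (∃ c x y, (TGraph k ℓ).Adj x y ∧ a = embedT k ℓ c x ∧ b = embedT k ℓ c y))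

/-- The set `V_ℓ` of vertices of `T(u,v,k,ℓ)` not belonging to the interior of any
leaf copy of `P(x,y,2^k)`: at level `0` it consists of the two special vertices, and
at level `ℓ+1` it consists of the vertices of the base copy of `P(u,v,5)` together
with the images of the sets `V_ℓ` of the three glued copies. -/
def Vset (k : ℕ) : (ℓ : ℕ) → Set (TVert k ℓ)
  | 0 => {Sum.inl 0, Sum.inl 1}
  | ℓ + 1 => {a | (∃ x, a = embedP k ℓ x) ∨ ∃ c x, x ∈ Vset k ℓ ∧ a = embedT k ℓ c x}

-- basic tests
example : PAdj 5 (Sum.inl 0) (Sum.inr 0) := rfl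
example : (Pgraph 5).Adj (Sum.inl 0) (Sum.inr 0) :=
  ⟨by simp, Or.inl rfl⟩
instance instFinT (k : ℕ) : ∀ ℓ, Finite (TInner k ℓ)
  | 0 => by unfold TInner; infer_instance
  | ℓ + 1 => by have := instFinT k ℓ; unfold TInner; infer_instance

lemma mem_inl (k : ℕ) : ∀ ℓ (x : Fin 2), (Sum.inl x : TVert k ℓ) ∈ Vset k ℓ
  | 0, x => by fin_cases x <;> simp [Vset]
  | ℓ + 1, x => Or.inl ⟨Sum.inl x, rfl⟩

lemma mem_embedP (k ℓ : ℕ) (x : Fin 2 ⊕ Fin 5) : embedP k ℓ x ∈ Vset k (ℓ+1) :=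
  Or.inl ⟨x, rfl⟩

lemma mem_embedT (k ℓ : ℕ) (c : Fin 3) {x : TVert k ℓ} (hx : x ∈ Vset k ℓ) :
    embedT k ℓ c x ∈ Vset k (ℓ+1) := Or.inr ⟨c, x, hx, rfl⟩

lemma embedT_inj (k ℓ : ℕ) (c : Fin 3) : Function.Injective (embedT k ℓ c) := by
  intro x y h
  match x, y with
  | Sum.inl a, Sum.inl b =>
    have hg : (gluePair c).1 ≠ (gluePair c).2 := by
      simp only [gluePair, ne_eq, Fin.mk.injEq]; omega
    have hab : a = b := by
      by_cases ha : a = 0 <;> by_cases hb : b = 0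
      · rw [ha, hb]
      · exfalso
        simp only [embedT, if_pos ha, if_neg hb] at h
        injection h with h1; injection h1 with h2; exact hg h2
      · exfalso
        simp only [embedT, if_pos hb, if_neg ha] at h
        injection h with h1; injection h1 with h2; exact hg h2.symm
      · have h1 := a.isLt; have h2 := b.isLt
        simp only [Fin.ext_iff, Fin.val_zero] at ha hb ⊢
        omega
    rw [hab]
  | Sum.inl a, Sum.inr w => by_cases h0 : a = 0 <;> simp_all [embedT] <;> (injection h with h1; injection h1)
  | Sum.inr w, Sum.inl a => by_cases h0 : a = 0 <;> simp_all [embedT] <;> (injection h with h1; injection h1)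
  | Sum.inr w, Sum.inr w' =>
    simp only [embedT] at h
    injection h with h1
    injection h1 with h2
    cases h2; rfl

lemma embedP_inj (k ℓ : ℕ) : Function.Injective (embedP k ℓ) := by
  intro x y h
  match x, y with
  | Sum.inl a, Sum.inl b => simp_all [embedP]
  | Sum.inl a, Sum.inr w => simp_all [embedP]
  | Sum.inr w, Sum.inl a => simp_all [embedP]
  | Sum.inr w, Sum.inr w' =>
    simp only [embedP] at h
    injection h with h1
    injection h1 with h2
    rw [h2]

lemma adj_embedT (k ℓ : ℕ) (c : Fin 3) {x y : TVert k ℓ} (h : (TGraph k ℓ).Adj x y) :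
    (TGraph k (ℓ+1)).Adj (embedT k ℓ c x) (embedT k ℓ c y) := by
  refine ⟨fun he => h.ne (embedT_inj k ℓ c he), Or.inl (Or.inr ⟨c, x, y, h, rfl, rfl⟩)⟩

lemma adj_embedP (k ℓ : ℕ) {x y : Fin 2 ⊕ Fin 5} (h : (Pgraph 5).Adj x y) :
    (TGraph k (ℓ+1)).Adj (embedP k ℓ x) (embedP k ℓ y) := by
  refine ⟨fun he => h.ne (embedP_inj k ℓ he), Or.inl (Or.inl ⟨x, y, h, rfl, rfl⟩)⟩

lemma fin3_unique {a c d d' : Fin 3} (h1 : c ≠ a) (h2 : d ≠ c) (h3 : d ≠ a)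
    (h4 : d' ≠ c) (h5 : d' ≠ a) : d = d' := by
  have : ∀ a c d d' : Fin 3, c = a ∨ d = c ∨ d = a ∨ d' = c ∨ d' = a ∨ d = d' := by decide
  rcases this a c d d' with h|h|h|h|h|h <;> first | exact h | (exfalso; tauto)

lemma fin3_pairs {a b w0 w1 w2 w3 w4 : Fin 3}
    (h0 : w0 ≠ a) (h1 : w1 ≠ b) (h2 : w2 ≠ a) (h3 : w3 ≠ b) (h4 : w4 ≠ a)
    (p0 : w0 ≠ w1) (p1 : w1 ≠ w2) (p2 : w2 ≠ w3) (p3 : w3 ≠ w4) :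
    ((a = b → (w0 = w2 ∧ w1 = w3 ∧ w2 = w4)) ∧ (w0 = w2 ∨ w1 = w3 ∨ w2 = w4)) := by
  have key : ∀ a b w0 w1 w2 w3 w4 : Fin 3,
      w0 = a ∨ w1 = b ∨ w2 = a ∨ w3 = b ∨ w4 = a ∨
      w0 = w1 ∨ w1 = w2 ∨ w2 = w3 ∨ w3 = w4 ∨
      ((a = b → (w0 = w2 ∧ w1 = w3 ∧ w2 = w4)) ∧ (w0 = w2 ∨ w1 = w3 ∨ w2 = w4)) := by decide
  rcases key a b w0 w1 w2 w3 w4 with h|h|h|h|h|h|h|h|h|h <;> first | exact h | (exfalso; tauto)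

lemma card_ne_fin3 (a : Fin 3) : Nat.card {c : Fin 3 // c ≠ a} = 2 := by
  simp [Nat.card_eq_fintype_card]

lemma TGraph_zero (k : ℕ) : TGraph k 0 = Pgraph (2^k) := rfl

lemma padj_inl {b : ℕ} (i : Fin b) :
    (Pgraph b).Adj (Sum.inl ⟨i.val % 2, by omega⟩) (Sum.inr i) :=
  ⟨by simp, Or.inl rfl⟩

lemma padj_succ {b : ℕ} (i j : Fin b) (h : (j : ℕ) = (i : ℕ) + 1) :
    (Pgraph b).Adj (Sum.inr i) (Sum.inr j) :=
  ⟨by simp only [ne_eq, Sum.inr.injEq, Fin.ext_iff]; omega, Or.inl h⟩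

lemma psi_irrel {V : Type*} {S : Set V} (ψ : S → Fin 3) {x y : V} (hx : x ∈ S) (hy : y ∈ S)
    (h : x = y) : ψ ⟨x, hx⟩ = ψ ⟨y, hy⟩ := by subst h; rfl

section Base
variable (k : ℕ) (ψ : (Vset k 0) → Fin 3)

lemma base_not_a {φ : TVert k 0 → Fin 3} (hφ : φ ∈ properColorings (TGraph k 0))
    (hag : ∀ x : (Vset k 0), φ x = ψ x) (i : Fin (2^k)) :
    φ (Sum.inr i) ≠ ψ ⟨Sum.inl ⟨i.val % 2, by omega⟩, mem_inl k 0 ⟨i.val % 2, by omega⟩⟩ := by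
  have hadj : (TGraph k 0).Adj (Sum.inl ⟨i.val % 2, by omega⟩) (Sum.inr i) := padj_inl i
  have := hφ _ _ hadj.symm
  rwa [hag ⟨Sum.inl ⟨i.val % 2, by omega⟩, mem_inl k 0 _⟩] at this

lemma base_bound_b :
    Nat.card {φ : TVert k 0 → Fin 3 // φ ∈ properColorings (TGraph k 0) ∧
      ∀ x : (Vset k 0), φ x = ψ x} ≤ 2 ^ (2 ^ k) := by
  classical
  set f : Fin (2^k) → Fin 3 :=
    fun i => ψ ⟨Sum.inl ⟨i.val % 2, by omega⟩, mem_inl k 0 ⟨i.val % 2, by omega⟩⟩ with hf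
  have hinj : Function.Injective
      (fun (φ : {φ : TVert k 0 → Fin 3 // φ ∈ properColorings (TGraph k 0) ∧
        ∀ x : (Vset k 0), φ x = ψ x}) =>
        (fun i => ⟨φ.1 (Sum.inr i), base_not_a k ψ φ.2.1 φ.2.2 i⟩ :
          ∀ i : Fin (2^k), {c : Fin 3 // c ≠ f i})) := by
    intro φ1 φ2 h
    apply Subtype.ext; funext v
    match v with
    | Sum.inl x =>
      rw [φ1.2.2 ⟨Sum.inl x, mem_inl k 0 x⟩, φ2.2.2 ⟨Sum.inl x, mem_inl k 0 x⟩]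
    | Sum.inr i =>
      have := congrFun h i
      exact congrArg Subtype.val this
  calc Nat.card _ ≤ Nat.card (∀ i : Fin (2^k), {c : Fin 3 // c ≠ f i}) :=
        Nat.card_le_card_of_injective _ hinj
    _ = ∏ i : Fin (2^k), Nat.card {c : Fin 3 // c ≠ f i} := Nat.card_pi
    _ = ∏ _i : Fin (2^k), 2 := by simp [card_ne_fin3]
    _ = 2 ^ (2^k) := by simp

lemma base_bound_a
    (hab : ψ ⟨Sum.inl 0, mem_inl k 0 0⟩ = ψ ⟨Sum.inl 1, mem_inl k 0 1⟩) :
    Nat.card {φ : TVert k 0 → Fin 3 // φ ∈ properColorings (TGraph k 0) ∧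
      ∀ x : (Vset k 0), φ x = ψ x} ≤ 2 := by
  classical
  set a : Fin 3 := ψ ⟨Sum.inl 0, mem_inl k 0 0⟩ with ha
  have hpos : 0 < 2^k := Nat.pow_pos (by norm_num)
  have hna : ∀ (φ : TVert k 0 → Fin 3), φ ∈ properColorings (TGraph k 0) →
      (∀ x : (Vset k 0), φ x = ψ x) → ∀ i : Fin (2^k), φ (Sum.inr i) ≠ a := by
    intro φ hφ hag i
    have h := base_not_a k ψ hφ hag i
    rcases Nat.mod_two_eq_zero_or_one i.val with h2 | h2
    · have : ψ ⟨Sum.inl ⟨i.val % 2, by omega⟩, mem_inl k 0 _⟩ = a := by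
        rw [ha]
        exact psi_irrel ψ _ _ (congrArg Sum.inl (Fin.ext (by simp [h2])))
      rwa [this] at h
    · have : ψ ⟨Sum.inl ⟨i.val % 2, by omega⟩, mem_inl k 0 _⟩ = a := by
        rw [hab]
        exact psi_irrel ψ _ _ (congrArg Sum.inl (Fin.ext (by simp [h2])))
      rwa [this] at h
  have hinj : Function.Injective
      (fun (φ : {φ : TVert k 0 → Fin 3 // φ ∈ properColorings (TGraph k 0) ∧
        ∀ x : (Vset k 0), φ x = ψ x}) =>
        (⟨φ.1 (Sum.inr ⟨0, hpos⟩), hna φ.1 φ.2.1 φ.2.2 ⟨0, hpos⟩⟩ : {c : Fin 3 // c ≠ a})) := by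
    intro φ1 φ2 h
    have h0 : φ1.1 (Sum.inr ⟨0, hpos⟩) = φ2.1 (Sum.inr ⟨0, hpos⟩) := congrArg Subtype.val h
    have key : ∀ n (hn : n < 2^k), φ1.1 (Sum.inr ⟨n, hn⟩) = φ2.1 (Sum.inr ⟨n, hn⟩) := by
      intro n
      induction n with
      | zero => intro hn; exact h0
      | succ m ih =>
        intro hn
        have hm : m < 2^k := by omega
        have hadj : (TGraph k 0).Adj (Sum.inr ⟨m, hm⟩) (Sum.inr ⟨m+1, hn⟩) :=
          padj_succ _ _ rfl
        exact fin3_unique (hna φ1.1 φ1.2.1 φ1.2.2 ⟨m, hm⟩)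
          (Ne.symm (φ1.2.1 _ _ hadj)) (hna φ1.1 φ1.2.1 φ1.2.2 ⟨m+1, hn⟩)
          ((ih hm) ▸ Ne.symm (φ2.2.1 _ _ hadj)) (hna φ2.1 φ2.2.1 φ2.2.2 ⟨m+1, hn⟩)
    apply Subtype.ext; funext v
    match v with
    | Sum.inl x =>
      rw [φ1.2.2 ⟨Sum.inl x, mem_inl k 0 x⟩, φ2.2.2 ⟨Sum.inl x, mem_inl k 0 x⟩]
    | Sum.inr i => exact key i.val i.isLt
  calc Nat.card _ ≤ Nat.card {c : Fin 3 // c ≠ a} := Nat.card_le_card_of_injective _ hinj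
    _ = 2 := card_ne_fin3 a

end Base

instance (b : ℕ) : DecidableRel (PAdj b) := fun x y =>
  match x, y with
  | Sum.inr i, Sum.inr j => inferInstanceAs (Decidable ((j : ℕ) = (i : ℕ) + 1))
  | Sum.inl x, Sum.inr i => inferInstanceAs (Decidable ((x : ℕ) = (i : ℕ) % 2))
  | Sum.inl _, Sum.inl _ => inferInstanceAs (Decidable False)
  | Sum.inr _, Sum.inl _ => inferInstanceAs (Decidable False)

lemma padj_ne {b : ℕ} {x y : Fin 2 ⊕ Fin b} (h : PAdj b x y) : x ≠ y := by
  match x, y with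
  | Sum.inl _, Sum.inl _ => exact absurd h id
  | Sum.inl _, Sum.inr _ => simp
  | Sum.inr _, Sum.inl _ => exact absurd h id
  | Sum.inr i, Sum.inr j =>
    simp only [ne_eq, Sum.inr.injEq, Fin.ext_iff]
    change (j : ℕ) = (i : ℕ) + 1 at h
    omega

lemma padj_adj {b : ℕ} {x y : Fin 2 ⊕ Fin b} (h : PAdj b x y) : (Pgraph b).Adj x y :=
  ⟨padj_ne h, Or.inl h⟩

lemma main (k : ℕ) : ∀ ℓ, ∀ ψ : (Vset k ℓ) → Fin 3,
    ψ ∈ properColorings ((TGraph k ℓ).induce (Vset k ℓ)) →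
    (Nat.card {φ : TVert k ℓ → Fin 3 // φ ∈ properColorings (TGraph k ℓ) ∧
        ∀ x : (Vset k ℓ), φ x = ψ x} ≤ 2 ^ (2 ^ k * 2 ^ ℓ + 3 ^ ℓ)) ∧
    (ψ ⟨Sum.inl 0, mem_inl k ℓ 0⟩ = ψ ⟨Sum.inl 1, mem_inl k ℓ 1⟩ →
      Nat.card {φ : TVert k ℓ → Fin 3 // φ ∈ properColorings (TGraph k ℓ) ∧
        ∀ x : (Vset k ℓ), φ x = ψ x} ≤ 2 ^ 3 ^ ℓ) := by
  intro ℓ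
  induction ℓ with
  | zero =>
    intro ψ hψ
    constructor
    · exact (base_bound_b k ψ).trans
        (Nat.pow_le_pow_right (by norm_num) (by norm_num))
    · intro hab
      exact (base_bound_a k ψ hab).trans (by norm_num)
  | succ ℓ IH =>
    intro ψ hψ
    classical
    set ψc : Fin 3 → ((Vset k ℓ) → Fin 3) :=
      fun c x => ψ ⟨embedT k ℓ c x.1, mem_embedT k ℓ c x.2⟩ with hψcdef
    have hψc : ∀ c, ψc c ∈ properColorings ((TGraph k ℓ).induce (Vset k ℓ)) := by
      intro c x y hadj
      exact hψ ⟨embedT k ℓ c x.1, mem_embedT k ℓ c x.2⟩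
        ⟨embedT k ℓ c y.1, mem_embedT k ℓ c y.2⟩ (adj_embedT k ℓ c hadj)
    set N : Fin 3 → ℕ := fun c =>
      Nat.card {φ' : TVert k ℓ → Fin 3 // φ' ∈ properColorings (TGraph k ℓ) ∧
        ∀ x : (Vset k ℓ), φ' x = ψc c x} with hN
    -- the restriction injection
    have hinj : Function.Injective
        (fun (φ : {φ : TVert k (ℓ+1) → Fin 3 // φ ∈ properColorings (TGraph k (ℓ+1)) ∧
            ∀ x : (Vset k (ℓ+1)), φ x = ψ x}) =>
          (fun c => ⟨fun v => φ.1 (embedT k ℓ c v),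
            fun x y h => φ.2.1 _ _ (adj_embedT k ℓ c h),
            fun x => φ.2.2 ⟨embedT k ℓ c x.1, mem_embedT k ℓ c x.2⟩⟩ :
            ∀ c : Fin 3, {φ' : TVert k ℓ → Fin 3 // φ' ∈ properColorings (TGraph k ℓ) ∧
              ∀ x : (Vset k ℓ), φ' x = ψc c x})) := by
      intro φ1 φ2 h
      apply Subtype.ext; funext v
      match v with
      | Sum.inl x =>
        rw [φ1.2.2 ⟨Sum.inl x, mem_inl k (ℓ+1) x⟩, φ2.2.2 ⟨Sum.inl x, mem_inl k (ℓ+1) x⟩]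
      | Sum.inr (Sum.inl j) =>
        rw [φ1.2.2 ⟨Sum.inr (Sum.inl j), mem_embedP k ℓ (Sum.inr j)⟩,
            φ2.2.2 ⟨Sum.inr (Sum.inl j), mem_embedP k ℓ (Sum.inr j)⟩]
      | Sum.inr (Sum.inr (c, w)) =>
        have h1 := congrArg Subtype.val (congrFun h c)
        exact congrFun h1 (Sum.inr w)
    have hprod : Nat.card {φ : TVert k (ℓ+1) → Fin 3 //
          φ ∈ properColorings (TGraph k (ℓ+1)) ∧
          ∀ x : (Vset k (ℓ+1)), φ x = ψ x} ≤ N 0 * N 1 * N 2 := by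
      calc Nat.card _ ≤ Nat.card (∀ c : Fin 3,
            {φ' : TVert k ℓ → Fin 3 // φ' ∈ properColorings (TGraph k ℓ) ∧
              ∀ x : (Vset k ℓ), φ' x = ψc c x}) := Nat.card_le_card_of_injective _ hinj
        _ = ∏ c : Fin 3, N c := Nat.card_pi
        _ = N 0 * N 1 * N 2 := by rw [Fin.prod_univ_three]
    -- glue colors and constraints
    set w5 : Fin 5 → Fin 3 :=
      fun j => ψ ⟨Sum.inr (Sum.inl j), mem_embedP k ℓ (Sum.inr j)⟩ with hw5
    set av : Fin 3 := ψ ⟨Sum.inl 0, mem_inl k (ℓ+1) 0⟩ with hav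
    set bv : Fin 3 := ψ ⟨Sum.inl 1, mem_inl k (ℓ+1) 1⟩ with hbv
    have hPadj : ∀ {x y : Fin 2 ⊕ Fin 5}, (Pgraph 5).Adj x y →
        ψ ⟨embedP k ℓ x, mem_embedP k ℓ x⟩ ≠ ψ ⟨embedP k ℓ y, mem_embedP k ℓ y⟩ :=
      fun h => hψ _ _ (adj_embedP k ℓ h)
    have h0a : w5 (0 : Fin 5) ≠ av :=
      (hPadj (x := Sum.inl 0) (y := Sum.inr (0 : Fin 5)) (padj_adj (by decide))).symm
    have h1b : w5 (1 : Fin 5) ≠ bv :=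
      (hPadj (x := Sum.inl 1) (y := Sum.inr (1 : Fin 5)) (padj_adj (by decide))).symm
    have h2a : w5 (2 : Fin 5) ≠ av :=
      (hPadj (x := Sum.inl 0) (y := Sum.inr (2 : Fin 5)) (padj_adj (by decide))).symm
    have h3b : w5 (3 : Fin 5) ≠ bv :=
      (hPadj (x := Sum.inl 1) (y := Sum.inr (3 : Fin 5)) (padj_adj (by decide))).symm
    have h4a : w5 (4 : Fin 5) ≠ av :=
      (hPadj (x := Sum.inl 0) (y := Sum.inr (4 : Fin 5)) (padj_adj (by decide))).symm
    have p01 : w5 (0 : Fin 5) ≠ w5 (1 : Fin 5) :=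
      hPadj (x := Sum.inr (0 : Fin 5)) (y := Sum.inr (1 : Fin 5)) (padj_adj (by decide))
    have p12 : w5 (1 : Fin 5) ≠ w5 (2 : Fin 5) :=
      hPadj (x := Sum.inr (1 : Fin 5)) (y := Sum.inr (2 : Fin 5)) (padj_adj (by decide))
    have p23 : w5 (2 : Fin 5) ≠ w5 (3 : Fin 5) :=
      hPadj (x := Sum.inr (2 : Fin 5)) (y := Sum.inr (3 : Fin 5)) (padj_adj (by decide))
    have p34 : w5 (3 : Fin 5) ≠ w5 (4 : Fin 5) :=
      hPadj (x := Sum.inr (3 : Fin 5)) (y := Sum.inr (4 : Fin 5)) (padj_adj (by decide))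
    have pairs := fin3_pairs h0a h1b h2a h3b h4a p01 p12 p23 p34
    -- per-copy bounds via IH
    have hb : ∀ c, N c ≤ 2 ^ (2 ^ k * 2 ^ ℓ + 3 ^ ℓ) := fun c => (IH (ψc c) (hψc c)).1
    have ha : ∀ c, ψc c ⟨Sum.inl 0, mem_inl k ℓ 0⟩ = ψc c ⟨Sum.inl 1, mem_inl k ℓ 1⟩ →
        N c ≤ 2 ^ 3 ^ ℓ := fun c => (IH (ψc c) (hψc c)).2
    have hsum3 : 3 ^ ℓ + 3 ^ ℓ + 3 ^ ℓ = 3 ^ (ℓ + 1) := by rw [pow_succ]; ring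
    have conj2 : av = bv →
        Nat.card {φ : TVert k (ℓ+1) → Fin 3 // φ ∈ properColorings (TGraph k (ℓ+1)) ∧
          ∀ x : (Vset k (ℓ+1)), φ x = ψ x} ≤ 2 ^ 3 ^ (ℓ+1) := by
      intro hab
      obtain ⟨h02, h13, h24⟩ := pairs.1 hab
      have hall : ∀ c, N c ≤ 2 ^ 3 ^ ℓ := by
        intro c
        apply ha c
        fin_cases c
        · exact h02
        · exact h13
        · exact h24
      calc Nat.card _ ≤ N 0 * N 1 * N 2 := hprod
        _ ≤ 2 ^ 3 ^ ℓ * 2 ^ 3 ^ ℓ * 2 ^ 3 ^ ℓ :=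
            Nat.mul_le_mul (Nat.mul_le_mul (hall 0) (hall 1)) (hall 2)
        _ = 2 ^ 3 ^ (ℓ+1) := by rw [← pow_add, ← pow_add, hsum3]
    have hM : 2 ^ k * 2 ^ ℓ + 3 ^ ℓ + (2 ^ k * 2 ^ ℓ + 3 ^ ℓ) + 3 ^ ℓ
        = 2 ^ k * 2 ^ (ℓ + 1) + 3 ^ (ℓ + 1) := by rw [pow_succ, pow_succ]; ring
    refine ⟨?_, conj2⟩
    rcases pairs.2 with hq | hq | hq
    · have hs : N 0 ≤ 2 ^ 3 ^ ℓ := ha 0 hq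
      calc Nat.card _ ≤ N 0 * N 1 * N 2 := hprod
        _ ≤ 2 ^ 3 ^ ℓ * 2 ^ (2 ^ k * 2 ^ ℓ + 3 ^ ℓ) * 2 ^ (2 ^ k * 2 ^ ℓ + 3 ^ ℓ) :=
            Nat.mul_le_mul (Nat.mul_le_mul hs (hb 1)) (hb 2)
        _ = 2 ^ (2 ^ k * 2 ^ (ℓ + 1) + 3 ^ (ℓ + 1)) := by
            rw [← pow_add, ← pow_add]; congr 1; rw [← hM]; try ring
    · have hs : N 1 ≤ 2 ^ 3 ^ ℓ := ha 1 hq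
      calc Nat.card _ ≤ N 0 * N 1 * N 2 := hprod
        _ ≤ 2 ^ (2 ^ k * 2 ^ ℓ + 3 ^ ℓ) * 2 ^ 3 ^ ℓ * 2 ^ (2 ^ k * 2 ^ ℓ + 3 ^ ℓ) :=
            Nat.mul_le_mul (Nat.mul_le_mul (hb 0) hs) (hb 2)
        _ = 2 ^ (2 ^ k * 2 ^ (ℓ + 1) + 3 ^ (ℓ + 1)) := by
            rw [← pow_add, ← pow_add]; congr 1; rw [← hM]; try ring
    · have hs : N 2 ≤ 2 ^ 3 ^ ℓ := ha 2 hq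
      calc Nat.card _ ≤ N 0 * N 1 * N 2 := hprod
        _ ≤ 2 ^ (2 ^ k * 2 ^ ℓ + 3 ^ ℓ) * 2 ^ (2 ^ k * 2 ^ ℓ + 3 ^ ℓ) * 2 ^ 3 ^ ℓ :=
            Nat.mul_le_mul (Nat.mul_le_mul (hb 0) (hb 1)) hs
        _ = 2 ^ (2 ^ k * 2 ^ (ℓ + 1) + 3 ^ (ℓ + 1)) := by
            rw [← pow_add, ← pow_add, ← hM]

/-- Lemma 3: for `ℓ, k ≥ 1`, any proper 3-coloring `ψ` of the subgraph of
`T(u,v,k,ℓ)` induced by `V_ℓ` extends to at most `2^(2^(k+ℓ) + 3^ℓ)` proper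
3-colorings of `T(u,v,k,ℓ)`. -/
theorem stmt9 (k ℓ : ℕ) (hk : 1 ≤ k) (hℓ : 1 ≤ ℓ)
    (ψ : (Vset k ℓ) → Fin 3)
    (hψ : ψ ∈ properColorings ((TGraph k ℓ).induce (Vset k ℓ))) :
    Nat.card {φ : TVert k ℓ → Fin 3 // φ ∈ properColorings (TGraph k ℓ) ∧
      ∀ x : (Vset k ℓ), φ x = ψ x} ≤ 2 ^ (2 ^ (k + ℓ) + 3 ^ ℓ) := by
  have := (main k ℓ ψ hψ).1
  rwa [← pow_add] at this
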